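/- Let G be a strongly regular graph with parameters (n, d, α, β) with β ≥ α, and let λ₂ = 1 − ((α−β) + √((α−β)² + 4(d−β)))/(2d) be the smallest nonzero normalized Laplacian eigenvalue. If λ₂ ≤ (2 + α)/d, then d ≤ 2α − β + 4. -/

import Mathlib

private lemma srg_step {V : Type*} [Fintype V] [DecidableEq V] (G : SimpleGraph V)
    [DecidableRel G.Adj] {n d α β : ℕ} (hsrg : G.IsSRGWith n d α β)
    (hd : α + 1 = d) {x y z : V} (hxy : G.Adj x y) (hxz : G.Adj x z) (hzy : z ≠ y) :
    G.Adj y z := by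
  classical
  have hdeg : G.degree x = d := hsrg.regular x
  set T : Finset V := (G.commonNeighbors x y).toFinset with hT
  set S : Finset V := (G.neighborFinset x).erase y with hS
  have hcardT : T.card = α := by
    rw [hT, Set.toFinset_card, hsrg.of_adj x y hxy]
  have hcardS : S.card = α := by
    rw [hS, Finset.card_erase_of_mem (by simpa using hxy), G.card_neighborFinset_eq_degree,
      hdeg, ← hd]
    simp
  have hsub : T ⊆ S := by
    intro u hu
    rw [hT, Set.mem_toFinset, SimpleGraph.mem_commonNeighbors] at hu
    rw [hS, Finset.mem_erase]
    refine ⟨?_, by simpa using hu.1⟩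
    intro h; subst h
    exact G.irrefl hu.2
  have hTS : T = S := Finset.eq_of_subset_of_card_le hsub (by rw [hcardT, hcardS])
  have hz : z ∈ S := by
    rw [hS, Finset.mem_erase]; exact ⟨hzy, by simpa using hxz⟩
  rw [← hTS, hT, Set.mem_toFinset, SimpleGraph.mem_commonNeighbors] at hz
  exact hz.2

private lemma srg_alpha_two {V : Type*} [Fintype V] [DecidableEq V] (G : SimpleGraph V)
    [DecidableRel G.Adj] {n d α β : ℕ} (hsrg : G.IsSRGWith n d α β)
    (hconn : G.Connected) (hne_top : G ≠ ⊤) : α + 2 ≤ d := by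
  classical
  -- G has an edge
  have hne : Nonempty V := hconn.nonempty
  obtain ⟨v0⟩ := hne
  -- there exist distinct non-adjacent vertices
  have hna : ∃ a b : V, a ≠ b ∧ ¬ G.Adj a b := by
    by_contra h
    push_neg at h
    apply hne_top
    ext a b
    simp only [SimpleGraph.top_adj]
    exact ⟨fun hab => G.ne_of_adj hab, fun hab => h a b hab⟩
  obtain ⟨a, b, hab, hnadj⟩ := hna
  -- d ≥ 1
  have hd1 : 1 ≤ d := by
    by_contra h
    push_neg at h
    interval_cases d
    obtain ⟨w⟩ := hconn.1 a b
    cases w with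
    | nil => exact hab rfl
    | cons hadj p =>
      have h0 : G.degree a = 0 := hsrg.regular a
      rw [← SimpleGraph.card_neighborFinset_eq_degree, Finset.card_eq_zero] at h0
      have hm : _ ∈ G.neighborFinset a := (G.mem_neighborFinset a _).2 hadj
      rw [h0] at hm
      exact absurd hm (Finset.notMem_empty _)
  -- there is an adjacent pair
  have hadjpair : ∃ v w : V, G.Adj v w := by
    have : 0 < G.degree v0 := by rw [hsrg.regular v0]; omega
    rw [← SimpleGraph.card_neighborFinset_eq_degree, Finset.card_pos] at this
    obtain ⟨w, hw⟩ := this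
    exact ⟨v0, w, (G.mem_neighborFinset v0 w).1 hw⟩
  obtain ⟨v, w, hvw⟩ := hadjpair
  -- α + 1 ≤ d
  have hα1 : α + 1 ≤ d := by
    have := hvw.card_commonNeighbors_lt_degree
    rw [hsrg.regular v, hsrg.of_adj v w hvw] at this
    omega
  by_contra h
  push_neg at h
  have hd : α + 1 = d := by omega
  -- everything reachable from v along walks stays adjacent to v
  have key : ∀ x u : V, G.Walk x u → (G.Adj v x ∨ v = x) → (G.Adj v u ∨ v = u) := by
    intro x u p
    induction p with
    | nil => exact fun h => h
    | @cons x z u hxz p ih =>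
      intro hx
      apply ih
      rcases hx with hx | hx
      · by_cases hzv : z = v
        · right; exact hzv.symm
        · left
          exact srg_step G hsrg hd hx.symm hxz (fun hh => hzv hh)
      · subst hx; left; exact hxz
  have hall : ∀ u : V, v ≠ u → G.Adj v u := by
    intro u hu
    obtain ⟨p⟩ := hconn.1 v u
    rcases key v u p (Or.inr rfl) with h | h
    · exact h
    · exact absurd h hu
  apply hne_top
  ext x y
  simp only [SimpleGraph.top_adj]
  constructor
  · exact fun hxy => G.ne_of_adj hxy
  · intro hxy
    rcases eq_or_ne v x with hvx | hvx
    · subst hvx; exact hall y hxy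
    · rcases eq_or_ne v y with hvy | hvy
      · subst hvy; exact (hall x hvx).symm
      · exact srg_step G hsrg hd (hall x hvx) (hall y hvy) (Ne.symm hxy)

theorem srg_lambda2_small_implies_d_bound
    {V : Type*} [Fintype V] [DecidableEq V] (G : SimpleGraph V) [DecidableRel G.Adj]
    (n d α β : ℕ) (hsrg : G.IsSRGWith n d α β)
    (hconn : G.Connected) (hne_top : G ≠ ⊤)
    (hβα : α ≤ β)
    (hlam : 1 - (((α : ℝ) - β) + Real.sqrt (((α : ℝ) - β) ^ 2 + 4 * ((d : ℝ) - β))) / (2 * d)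
        ≤ (2 + (α : ℝ)) / d) :
    (d : ℤ) ≤ 2 * α - β + 4 := by
  classical
  have hα2 : α + 2 ≤ d := srg_alpha_two G hsrg hconn hne_top
  -- β ≤ d
  have hβd : β ≤ d := by
    have hna : ∃ a b : V, a ≠ b ∧ ¬ G.Adj a b := by
      by_contra h
      push_neg at h
      apply hne_top
      ext a b
      simp only [SimpleGraph.top_adj]
      exact ⟨fun hab => G.ne_of_adj hab, fun hab => h a b hab⟩
    obtain ⟨a, b, hab, hnadj⟩ := hna
    have := G.card_commonNeighbors_le_degree_left a b
    rw [hsrg.regular a, hsrg.of_not_adj hab hnadj] at this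
    exact this
  -- real arithmetic
  have hdpos : (0 : ℝ) < d := by
    have : 0 < d := by omega
    exact_mod_cast this
  set s : ℝ := Real.sqrt (((α : ℝ) - β) ^ 2 + 4 * ((d : ℝ) - β)) with hs
  have hsnn : 0 ≤ s := Real.sqrt_nonneg _
  have hssq : s ^ 2 = ((α : ℝ) - β) ^ 2 + 4 * ((d : ℝ) - β) := by
    rw [hs, Real.sq_sqrt]
    have : (β : ℝ) ≤ d := by exact_mod_cast hβd
    nlinarith [sq_nonneg ((α : ℝ) - β)]
  have hL : 2 * (d : ℝ) - 3 * α + β - 4 ≤ s := by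
    have h2 : ((1 : ℝ) - ((α : ℝ) - β + s) / (2 * d)) * (2 * d) ≤ ((2 + (α : ℝ)) / d) * (2 * d) :=
      mul_le_mul_of_nonneg_right hlam (by positivity)
    have e1 : ((1 : ℝ) - ((α : ℝ) - β + s) / (2 * d)) * (2 * d) = 2 * d - ((α : ℝ) - β + s) := by
      field_simp
    have e2 : ((2 + (α : ℝ)) / d) * (2 * d) = 2 * (2 + (α : ℝ)) := by
      field_simp
    rw [e1, e2] at h2
    linarith
  have hreal : (d : ℝ) ≤ 2 * α - β + 4 := by
    by_contra h
    push_neg at h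
    have hαd : (α : ℝ) + 2 ≤ d := by exact_mod_cast hα2
    nlinarith [sq_nonneg s, sq_nonneg (2 * (d : ℝ) - 3 * α + β - 4)]
  exact_mod_cast hreal
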